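/- The labelling f of Theorem 1 is a graceful labelling of the rooted symmetric tree: f is a bijection onto {0,...,h_1 - 1} and the induced edge labels |f(parent) - f(child)| over all edges are pairwise distinct, hence equal to {1,...,h_1 - 1}. -/
import Mathlib


/-- The labelling of Theorem 1 (Rofa 2021). A vertex at level `r = x.length + 1` of a
rooted symmetric tree with daughter degree sequence `k 1, ..., k (q-1)` and level numbers
`h` is identified with its sequence of edge indices `x = (x 1, ..., x (r-1))`, the entry
`x i` being `x.getD (i-1) 0`. Its label is
`x 1 * h 2 + x 2 * h 3 + ⋯ + x (r-1) * h r + (r-1)/2` if `r` is odd, and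
`(k 1 - x 1) * h 2 - x 2 * h 3 - ⋯ - x (r-1) * h r - (r-2)/2` if `r` is even. -/
def rofaLabel (k h : ℕ → ℕ) (x : List ℕ) : ℤ :=
  if (x.length + 1) % 2 = 1 then
    (∑ i ∈ Finset.range x.length, (x.getD i 0 : ℤ) * (h (i + 2) : ℤ)) +
      ((x.length / 2 : ℕ) : ℤ)
  else
    ((k 1 : ℤ) - (x.getD 0 0 : ℤ)) * (h 2 : ℤ) -
      (∑ i ∈ Finset.Icc 1 (x.length - 1), (x.getD i 0 : ℤ) * (h (i + 2) : ℤ)) -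
      (((x.length - 1) / 2 : ℕ) : ℤ)

/-- `x` is a valid index sequence for a vertex of the rooted symmetric tree with `q`
levels and daughter degree sequence `k 1, ..., k (q-1)`: it has length at most `q - 1`
and its `i`-th entry (the edge index `x i`, 1-based) is less than `k i`. -/
def ValidIdx (q : ℕ) (k : ℕ → ℕ) (x : List ℕ) : Prop :=
  x.length ≤ q - 1 ∧ ∀ i < x.length, x.getD i 0 < k (i + 1)

namespace RofaAux

lemma sum_Icc_one (g : ℕ → ℤ) (n : ℕ) :
    ∑ i ∈ Finset.Icc 1 n, g i = ∑ i ∈ Finset.range n, g (i+1) := by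
  rw [← Finset.Ico_add_one_right_eq_Icc, Finset.sum_Ico_eq_sum_range]
  simp [add_comm]

lemma rofa_nil (k h : ℕ → ℕ) : rofaLabel k h [] = 0 := by
  simp [rofaLabel]

/-- The label recursion into a subtree. -/
lemma rofa_cons (k h : ℕ → ℕ) (a : ℕ) (y : List ℕ)
    (H : y.length % 2 = 1 → (h 2 : ℤ) = 1 + k 2 * h 3) :
    rofaLabel k h (a :: y) =
      (if y.length % 2 = 0 then ((k 1 : ℤ) - a) else ((a : ℤ) + 1)) * h 2 -
        rofaLabel (fun i => k (i+1)) (fun i => h (i+1)) y := by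
  rcases Nat.even_or_odd y.length with he | ho
  · -- y.length even
    obtain ⟨s, hs⟩ := he
    rw [if_pos (by omega : y.length % 2 = 0)]
    simp only [rofaLabel, List.length_cons]
    rw [if_neg (by omega), if_pos (by omega)]
    rw [List.getD_cons_zero]
    have hs1 : ∑ i ∈ Finset.Icc 1 (y.length + 1 - 1), ((a :: y).getD i 0 : ℤ) * (h (i + 2) : ℤ)
        = ∑ i ∈ Finset.range y.length, (y.getD i 0 : ℤ) * (h (i + 2 + 1) : ℤ) := by
      rw [show y.length + 1 - 1 = y.length from rfl, sum_Icc_one]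
      refine Finset.sum_congr rfl fun i _ => ?_
      rw [List.getD_cons_succ, show i + 1 + 2 = i + 2 + 1 from rfl]
    rw [hs1, show y.length + 1 - 1 = y.length from rfl]
    ring
  · -- y.length odd
    obtain ⟨s, hs⟩ := ho
    have hH := H (by omega)
    rw [if_neg (by omega : ¬ y.length % 2 = 0)]
    simp only [rofaLabel, List.length_cons]
    rw [if_pos (by omega), if_neg (by omega)]
    rw [Finset.sum_range_succ' (fun i => ((a :: y).getD i 0 : ℤ) * (h (i + 2) : ℤ))]
    simp only [List.getD_cons_succ, List.getD_cons_zero]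
    have hy' : y.length = s + s + 1 := by omega
    rw [hy', Finset.sum_range_succ'
      (fun i => ((y.getD i 0 : ℤ)) * (h (i + 1 + 2) : ℤ))]
    rw [show s + s + 1 - 1 = s + s from rfl, sum_Icc_one]
    have hc : ∑ i ∈ Finset.range (s + s), ((y.getD (i+1) 0 : ℤ)) * (h (i + 1 + 1 + 2) : ℤ)
        = ∑ i ∈ Finset.range (s + s), ((y.getD (i+1) 0 : ℤ)) * (h (i + 1 + 2 + 1) : ℤ) := by
      refine Finset.sum_congr rfl fun i _ => by norm_num
    rw [hc, show (s + s + 1 + 1) / 2 = s + 1 by omega, show (s + s) / 2 = s by omega,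
      show (0 + 1 + 2 : ℕ) = 2 + 1 from rfl]
    push_cast
    rw [hH]
    ring

/-- The quantity whose distance from `h 1 - 1` is the edge label of the edge
from `x` to `x ++ [j]`. -/
def edgeC (k h : ℕ → ℕ) (x : List ℕ) (j : ℕ) : ℤ :=
  2 * (∑ i ∈ Finset.range x.length, (x.getD i 0 : ℤ) * (h (i + 2) : ℤ)) +
    (x.length : ℤ) + (j : ℤ) * (h (x.length + 2) : ℤ)

lemma edgeC_nil (k h : ℕ → ℕ) (j : ℕ) : edgeC k h [] j = (j : ℤ) * (h 2 : ℤ) := by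
  simp [edgeC]

lemma edgeC_cons (k h : ℕ → ℕ) (a : ℕ) (y : List ℕ) (j : ℕ) :
    edgeC k h (a :: y) j =
      2 * (a : ℤ) * (h 2 : ℤ) + 1 + edgeC (fun i => k (i+1)) (fun i => h (i+1)) y j := by
  simp only [edgeC, List.length_cons]
  rw [Finset.sum_range_succ' (fun i => ((a :: y).getD i 0 : ℤ) * (h (i + 2) : ℤ))]
  simp only [List.getD_cons_succ, List.getD_cons_zero]
  have hc : ∑ i ∈ Finset.range y.length, ((y.getD i 0 : ℤ)) * (h (i + 1 + 2) : ℤ)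
      = ∑ i ∈ Finset.range y.length, ((y.getD i 0 : ℤ)) * (h (i + 2 + 1) : ℤ) :=
    Finset.sum_congr rfl fun i _ => by norm_num
  rw [hc]
  push_cast
  ring

/-- The edge label formula. -/
lemma diff_eq (k h : ℕ → ℕ) (x : List ℕ) (j : ℕ) (H1 : (h 1 : ℤ) = 1 + k 1 * h 2) :
    |rofaLabel k h x - rofaLabel k h (x ++ [j])| = |edgeC k h x j - ((h 1 : ℤ) - 1)| := by
  have hja : ((x ++ [j]).getD x.length 0 : ℤ) = (j : ℤ) := by norm_cast; simp
  have hgd : ∀ i < x.length, ((x ++ [j]).getD i 0 : ℤ) = (x.getD i 0 : ℤ) := by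
    intro i hi; rw [List.getD_append _ _ _ _ hi]
  have hlen : (x ++ [j]).length = x.length + 1 := by simp
  rcases Nat.even_or_odd x.length with he | ho
  · -- x.length even: diff = edgeC - (h1 - 1)
    have key : rofaLabel k h x - rofaLabel k h (x ++ [j]) =
        edgeC k h x j - ((h 1 : ℤ) - 1) := by
      rcases Nat.eq_zero_or_pos x.length with h0 | hpos
      · have hx : x = [] := List.length_eq_zero_iff.mp h0
        subst hx
        simp only [rofaLabel, edgeC, List.nil_append, List.length_cons, List.length_nil]
        norm_num
        rw [H1]; ring
      · obtain ⟨t, ht⟩ : ∃ t, x.length = (2*t+1) + 1 := by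
          obtain ⟨s, hs⟩ := he; exact ⟨s - 1, by omega⟩
        simp only [rofaLabel, edgeC, hlen, ht]
        rw [if_pos (by omega), if_neg (by omega)]
        rw [Finset.sum_range_succ' (fun i => ((x.getD i 0 : ℤ)) * (h (i + 2) : ℤ))]
        rw [show 2*t+1+1+1 - 1 = (2*t+1)+1 from rfl, sum_Icc_one]
        rw [Finset.sum_range_succ
          (fun i => (((x ++ [j]).getD (i+1) 0 : ℤ)) * (h (i + 1 + 2) : ℤ))]
        rw [ht] at hja
        rw [hja, hgd 0 (by omega)]
        have e3 : ∑ i ∈ Finset.range (2*t+1), (((x ++ [j]).getD (i+1) 0 : ℤ)) * (h (i + 1 + 2) : ℤ)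
            = ∑ i ∈ Finset.range (2*t+1), ((x.getD (i+1) 0 : ℤ)) * (h (i + 1 + 2) : ℤ) :=
          Finset.sum_congr rfl fun i hi => by
            rw [hgd (i+1) (by simp at hi; omega)]
        rw [e3]
        rw [show ((2*t+1)+1)/2 = t+1 by omega]
        rw [show (0:ℕ) + 2 = 2 from rfl]
        push_cast
        rw [H1]
        ring
    rw [key]
  · -- x.length odd: diff = -(edgeC - (h1 - 1))
    have key : rofaLabel k h x - rofaLabel k h (x ++ [j]) =
        -(edgeC k h x j - ((h 1 : ℤ) - 1)) := by
      obtain ⟨s, hs⟩ := ho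
      simp only [rofaLabel, edgeC, hlen, hs]
      rw [if_neg (by omega), if_pos (by omega)]
      rw [Finset.sum_range_succ
        (fun i => (((x ++ [j]).getD i 0 : ℤ)) * (h (i + 2) : ℤ))]
      rw [hs] at hja
      rw [hja]
      have e3 : ∑ i ∈ Finset.range (2*s+1), (((x ++ [j]).getD i 0 : ℤ)) * (h (i + 2) : ℤ)
          = ∑ i ∈ Finset.range (2*s+1), ((x.getD i 0 : ℤ)) * (h (i + 2) : ℤ) :=
        Finset.sum_congr rfl fun i hi => by rw [hgd i (by simp at hi; omega)]
      rw [e3]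
      rw [Finset.sum_range_succ' (fun i => ((x.getD i 0 : ℤ)) * (h (i + 2) : ℤ))]
      rw [show 2*s+1 - 1 = 2*s from rfl, sum_Icc_one]
      rw [show (2*s+1+1)/2 = s+1 by omega, show (2*s)/2 = s by omega,
        show (0:ℕ) + 2 = 2 from rfl]
      push_cast
      rw [H1]
      ring
    rw [key, abs_neg]

lemma valid_nil (q : ℕ) (k : ℕ → ℕ) : ValidIdx q k [] := by
  constructor
  · simp
  · intro i hi; simp at hi

lemma valid_cons (q : ℕ) (k : ℕ → ℕ) (a : ℕ) (y : List ℕ) (hq : 2 ≤ q) :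
    ValidIdx q k (a :: y) ↔ a < k 1 ∧ ValidIdx (q-1) (fun i => k (i+1)) y := by
  constructor
  · rintro ⟨hl, hv⟩
    refine ⟨by simpa using hv 0 (by simp), ?_, ?_⟩
    · simp at hl; omega
    · intro i hi
      have := hv (i+1) (by simp; omega)
      simpa using this
  · rintro ⟨ha, hl, hv⟩
    refine ⟨by simp; omega, ?_⟩
    intro i hi
    match i with
    | 0 => simpa using ha
    | (m+1) =>
      have := hv m (by simp at hi; omega)
      simpa using this

/-- `(x, j)` is an edge of the tree (from `x` to `x ++ [j]`). -/
def IsEdge (q : ℕ) (k : ℕ → ℕ) (x : List ℕ) (j : ℕ) : Prop :=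
  ValidIdx q k x ∧ x.length + 1 ≤ q - 1 ∧ j < k (x.length + 1)

lemma isEdge_nil (q : ℕ) (k : ℕ → ℕ) (j : ℕ) :
    IsEdge q k [] j ↔ 2 ≤ q ∧ j < k 1 := by
  unfold IsEdge
  simp [valid_nil]
  omega

lemma isEdge_cons (q : ℕ) (k : ℕ → ℕ) (a : ℕ) (y : List ℕ) (j : ℕ) (hq : 2 ≤ q) :
    IsEdge q k (a :: y) j ↔ a < k 1 ∧ IsEdge (q-1) (fun i => k (i+1)) y j := by
  unfold IsEdge
  rw [valid_cons q k a y hq]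
  simp only [List.length_cons]
  constructor
  · rintro ⟨⟨ha, hv⟩, hl, hj⟩
    exact ⟨ha, hv, by omega, hj⟩
  · rintro ⟨ha, hv, hl, hj⟩
    exact ⟨⟨ha, hv⟩, by omega, hj⟩

lemma h_pos (q : ℕ) (k h : ℕ → ℕ) (hq : 1 ≤ q) (hhq : h q = 1)
    (hrec : ∀ i, 1 ≤ i → i ≤ q - 1 → h i = 1 + k i * h (i + 1)) : 1 ≤ h 1 := by
  rcases Nat.eq_or_lt_of_le hq with h1 | h2
  · rw [← h1] at hhq; omega
  · rw [hrec 1 le_rfl (by omega)]; omega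

theorem keyA (q : ℕ) : ∀ (k h : ℕ → ℕ), 1 ≤ q →
    (∀ i, 1 ≤ i → i ≤ q - 1 → 1 ≤ k i) → h q = 1 →
    (∀ i, 1 ≤ i → i ≤ q - 1 → h i = 1 + k i * h (i + 1)) →
    Set.BijOn (rofaLabel k h) {x | ValidIdx q k x} (Set.Ico 0 (h 1 : ℤ)) := by
  induction q with
  | zero => intro k h hq; omega
  | succ n ih =>
    intro k h hq hk hhq hrec
    rcases Nat.eq_zero_or_pos n with rfl | hn
    · -- q = 1
      have hx0 : ∀ x : List ℕ, ValidIdx 1 k x → x = [] := by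
        intro x hx
        have := hx.1
        exact List.length_eq_zero_iff.mp (by omega)
      refine ⟨?_, ?_, ?_⟩
      · intro x hx
        rw [hx0 x hx, rofa_nil]
        simp only [Set.mem_Ico, le_refl, true_and]
        have h11 : h 1 = 1 := hhq
        simp [h11]
      · intro x hx x' hx' _
        rw [hx0 x hx, hx0 x' hx']
      · intro v hv
        simp only [Set.mem_Ico] at hv
        have h11 : h 1 = 1 := hhq
        have : v = 0 := by rw [h11] at hv; push_cast at hv; omega
        exact ⟨[], valid_nil 1 k, by rw [rofa_nil, this]⟩
    · -- q = n + 1, n ≥ 1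
      have hq2 : 2 ≤ n + 1 := by omega
      set k' : ℕ → ℕ := fun i => k (i+1) with hk'def
      set h' : ℕ → ℕ := fun i => h (i+1) with hh'def
      have hk' : ∀ i, 1 ≤ i → i ≤ n - 1 → 1 ≤ k' i := fun i hi1 hi2 => hk (i+1) (by omega) (by omega)
      have hhq' : h' n = 1 := hhq
      have hrec' : ∀ i, 1 ≤ i → i ≤ n - 1 → h' i = 1 + k' i * h' (i+1) :=
        fun i hi1 hi2 => hrec (i+1) (by omega) (by omega)
      have IH := ih k' h' hn hk' hhq' hrec'
      have h2pos : 1 ≤ h 2 := h_pos n k' h' hn hhq' hrec'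
      have H1 : (h 1 : ℤ) = 1 + (k 1 : ℤ) * (h 2 : ℤ) := by exact_mod_cast hrec 1 (by omega) (by omega)
      have hk1 : 1 ≤ k 1 := hk 1 (by omega) (by omega)
      have Hcons : ∀ y : List ℕ, ValidIdx n k' y →
          (y.length % 2 = 1 → (h 2 : ℤ) = 1 + k 2 * h 3) := by
        intro y hy hodd
        have h1 : 1 ≤ y.length := by omega
        have h2 : 2 ≤ n := by have := hy.1; omega
        exact_mod_cast hrec 2 (by omega) (by omega)
      have hf' : ∀ y, ValidIdx n k' y →
          0 ≤ rofaLabel k' h' y ∧ rofaLabel k' h' y < (h 2 : ℤ) := by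
        intro y hy
        have := IH.mapsTo hy
        simpa [Set.mem_Ico] using this
      have cons_val : ∀ (a : ℕ) (y : List ℕ), a < k 1 → ValidIdx n k' y →
          ∃ B : ℤ, 1 ≤ B ∧ B ≤ (k 1 : ℤ) ∧
            rofaLabel k h (a :: y) = B * (h 2 : ℤ) - rofaLabel k' h' y ∧
            B = (if y.length % 2 = 0 then ((k 1 : ℤ) - a) else ((a : ℤ) + 1)) := by
        intro a y ha hy
        refine ⟨_, ?_, ?_, rofa_cons k h a y (Hcons y hy), rfl⟩
        · split <;> push_cast <;> omega
        · split <;> push_cast <;> omega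
      refine ⟨?_, ?_, ?_⟩
      · -- MapsTo
        intro x hx
        match x with
        | [] =>
          rw [rofa_nil]
          simp only [Set.mem_Ico, le_refl, true_and]
          exact_mod_cast h_pos (n+1) k h hq hhq hrec
        | a :: y =>
          obtain ⟨ha, hy⟩ := (valid_cons (n+1) k a y hq2).mp hx
          obtain ⟨B, hB1, hB2, hBval, _⟩ := cons_val a y ha hy
          obtain ⟨ht0, ht1⟩ := hf' y hy
          simp only [Set.mem_Ico]
          constructor
          · rw [hBval]; nlinarith
          · rw [hBval, H1]; nlinarith
      · -- InjOn
        intro x hx x' hx' heq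
        match x, x' with
        | [], [] => rfl
        | [], a' :: y' =>
          exfalso
          obtain ⟨ha', hy'⟩ := (valid_cons (n+1) k a' y' hq2).mp hx'
          obtain ⟨B, hB1, hB2, hBval, _⟩ := cons_val a' y' ha' hy'
          obtain ⟨ht0, ht1⟩ := hf' y' hy'
          rw [rofa_nil, hBval] at heq
          nlinarith
        | a :: y, [] =>
          exfalso
          obtain ⟨ha, hy⟩ := (valid_cons (n+1) k a y hq2).mp hx
          obtain ⟨B, hB1, hB2, hBval, _⟩ := cons_val a y ha hy
          obtain ⟨ht0, ht1⟩ := hf' y hy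
          rw [rofa_nil, hBval] at heq
          nlinarith
        | a :: y, a' :: y' =>
          obtain ⟨ha, hy⟩ := (valid_cons (n+1) k a y hq2).mp hx
          obtain ⟨ha', hy'⟩ := (valid_cons (n+1) k a' y' hq2).mp hx'
          obtain ⟨B, hB1, hB2, hBval, hBif⟩ := cons_val a y ha hy
          obtain ⟨B', hB1', hB2', hBval', hBif'⟩ := cons_val a' y' ha' hy'
          obtain ⟨ht0, ht1⟩ := hf' y hy
          obtain ⟨ht0', ht1'⟩ := hf' y' hy'
          rw [hBval, hBval'] at heq
          have hBB : B = B' := by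
            rcases lt_trichotomy B B' with hlt | heqB | hgt
            · exfalso; nlinarith
            · exact heqB
            · exfalso; nlinarith
          have htt : rofaLabel k' h' y = rofaLabel k' h' y' := by
            rw [hBB] at heq; linarith
          have hyy : y = y' := IH.injOn hy hy' htt
          subst hyy
          have haa : a = a' := by
            rw [hBB, hBif'] at hBif
            split at hBif <;> omega
          rw [haa]
      · -- SurjOn
        intro v hv
        simp only [Set.mem_Ico] at hv
        obtain ⟨hv0, hv1⟩ := hv
        rcases eq_or_lt_of_le hv0 with hv0' | hv0'
        · exact ⟨[], valid_nil (n+1) k, by rw [rofa_nil, ← hv0']⟩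
        · have hvk : v ≤ (k 1 : ℤ) * (h 2 : ℤ) := by rw [H1] at hv1; omega
          have h2pos' : (0:ℤ) < (h 2 : ℤ) := by exact_mod_cast h2pos
          obtain ⟨b, r, hdiv, hr0, hr1, hb0⟩ :
              ∃ b r : ℤ, v - 1 = b * (h 2 : ℤ) + r ∧ 0 ≤ r ∧ r < (h 2 : ℤ) ∧ 0 ≤ b := by
            refine ⟨(v-1) / (h 2:ℤ), (v-1) % (h 2:ℤ), ?_, ?_, ?_, ?_⟩
            · rw [mul_comm]; exact (Int.mul_ediv_add_emod _ _).symm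
            · exact Int.emod_nonneg _ (ne_of_gt h2pos')
            · exact Int.emod_lt_of_pos _ h2pos'
            · exact Int.ediv_nonneg (by omega) (by omega)
          have hbk : b ≤ (k 1 : ℤ) - 1 := by
            rcases le_or_gt b ((k 1 : ℤ) - 1) with hle | hlt
            · exact hle
            · exfalso
              have hh1 : (k 1 : ℤ) ≤ b := by omega
              have hh2 : (k 1 : ℤ) * (h 2 : ℤ) ≤ b * (h 2 : ℤ) :=
                mul_le_mul_of_nonneg_right hh1 (by omega)
              linarith
          have ht : (h 2 : ℤ) - 1 - r ∈ Set.Ico (0:ℤ) ((h' 1 : ℕ) : ℤ) := by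
            simp only [Set.mem_Ico]
            constructor
            · omega
            · show (h 2 : ℤ) - 1 - r < ((h 2 : ℕ) : ℤ); omega
          obtain ⟨y, hy, hfy⟩ := IH.surjOn ht
          have hy' : ValidIdx n k' y := hy
          set a : ℕ := if y.length % 2 = 0 then k 1 - 1 - b.toNat else b.toNat with hadef
          have hbtn : (b.toNat : ℤ) = b := Int.toNat_of_nonneg hb0
          have hbtn' : b.toNat ≤ k 1 - 1 := by omega
          have ha : a < k 1 := by
            rw [hadef]; split <;> omega
          obtain ⟨B, hB1, hB2, hBval, hBif⟩ := cons_val a y ha hy'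
          have hBb : B = b + 1 := by
            rw [hBif]
            by_cases hpar : y.length % 2 = 0
            · rw [if_pos hpar]
              have : (a : ℤ) = (k 1 : ℤ) - 1 - b := by
                rw [hadef, if_pos hpar]
                push_cast [hbtn']
                omega
              omega
            · rw [if_neg hpar]
              have : (a : ℤ) = b := by
                rw [hadef, if_neg hpar]
                omega
              omega
          refine ⟨a :: y, (valid_cons (n+1) k a y hq2).mpr ⟨ha, hy'⟩, ?_⟩
          rw [hBval, hBb, hfy]
          push_cast
          linarith [hdiv]

lemma helper1 (h2 c u : ℤ) (hh : 1 ≤ h2) (hu0 : 0 ≤ u) (hu2 : u ≤ 2*h2 - 2)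
    (heq : u + 1 = c * h2) : c = 1 ∧ u = h2 - 1 := by
  have hc : c = 1 := by
    rcases le_or_gt c 0 with hc | hc
    · have : c * h2 ≤ 0 * h2 := mul_le_mul_of_nonneg_right hc (by omega)
      simp at this; omega
    · rcases le_or_gt 2 c with hc2 | hc2
      · have : 2 * h2 ≤ c * h2 := mul_le_mul_of_nonneg_right hc2 (by omega)
        omega
      · omega
  subst hc; constructor; rfl; omega

lemma block_eq (h2 A B u v : ℤ) (hh : 1 ≤ h2) (hu0 : 0 ≤ u) (hu2 : u ≤ 2*h2-2)
    (hv0 : 0 ≤ v) (hv2 : v ≤ 2*h2-2)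
    (heq : 2*A*h2 + 1 + u = 2*B*h2 + 1 + v) : A = B ∧ u = v := by
  have key : A = B := by
    rcases lt_trichotomy A B with hab | hab | hab
    · exfalso
      have h1 : A + 1 ≤ B := by omega
      have h2' : (A+1) * (2*h2) ≤ B * (2*h2) :=
        mul_le_mul_of_nonneg_right h1 (by omega)
      nlinarith
    · exact hab
    · exfalso
      have h1 : B + 1 ≤ A := by omega
      have h2' : (B+1) * (2*h2) ≤ A * (2*h2) :=
        mul_le_mul_of_nonneg_right h1 (by omega)
      nlinarith
  subst key
  constructor; rfl; omega

theorem keyB (q : ℕ) : ∀ (k h : ℕ → ℕ), 1 ≤ q →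
    (∀ i, 1 ≤ i → i ≤ q - 1 → 1 ≤ k i) → h q = 1 →
    (∀ i, 1 ≤ i → i ≤ q - 1 → h i = 1 + k i * h (i + 1)) →
    (∀ x j, IsEdge q k x j →
      0 ≤ edgeC k h x j ∧ edgeC k h x j ≤ 2*((h 1 : ℤ) - 1) ∧
        edgeC k h x j ≠ (h 1 : ℤ) - 1) ∧
    (∀ t : ℤ, 0 ≤ t → t ≤ 2*((h 1 : ℤ) - 1) → t ≠ (h 1 : ℤ) - 1 →
      ∃! p : List ℕ × ℕ, IsEdge q k p.1 p.2 ∧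
        (edgeC k h p.1 p.2 = t ∨ edgeC k h p.1 p.2 = 2*((h 1 : ℤ) - 1) - t)) := by
  induction q with
  | zero => intro k h hq; omega
  | succ n ih =>
    intro k h hq hk hhq hrec
    rcases Nat.eq_zero_or_pos n with rfl | hn
    · -- q = 1 : no edges, trivial
      have noedge : ∀ (x : List ℕ) (j : ℕ), ¬ IsEdge 1 k x j := by
        rintro x j ⟨_, hl, _⟩; omega
      have h11 : h 1 = 1 := hhq
      constructor
      · intro x j he; exact absurd he (noedge x j)
      · intro t ht0 ht1 htne
        exfalso
        rw [h11] at ht1 htne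
        push_cast at ht1 htne
        omega
    · -- q = n+1, n ≥ 1
      have hq2 : 2 ≤ n + 1 := by omega
      set k' : ℕ → ℕ := fun i => k (i+1) with hk'def
      set h' : ℕ → ℕ := fun i => h (i+1) with hh'def
      have hk' : ∀ i, 1 ≤ i → i ≤ n - 1 → 1 ≤ k' i := fun i hi1 hi2 => hk (i+1) (by omega) (by omega)
      have hhq' : h' n = 1 := hhq
      have hrec' : ∀ i, 1 ≤ i → i ≤ n - 1 → h' i = 1 + k' i * h' (i+1) :=
        fun i hi1 hi2 => hrec (i+1) (by omega) (by omega)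
      obtain ⟨IHrange, IHuniq⟩ := ih k' h' hn hk' hhq' hrec'
      have h2pos : 1 ≤ h 2 := h_pos n k' h' hn hhq' hrec'
      have h2pos' : (1:ℤ) ≤ (h 2 : ℤ) := by exact_mod_cast h2pos
      have H1 : (h 1 : ℤ) = 1 + (k 1 : ℤ) * (h 2 : ℤ) := by
        exact_mod_cast hrec 1 (by omega) (by omega)
      have hk1 : 1 ≤ k 1 := hk 1 (by omega) (by omega)
      have hk1' : (1:ℤ) ≤ (k 1 : ℤ) := by exact_mod_cast hk1
      have hK : (h 1 : ℤ) - 1 = (k 1 : ℤ) * (h 2 : ℤ) := by omega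
      have hH'1 : ((h' 1 : ℕ) : ℤ) = (h 2 : ℤ) := rfl
      -- primed (syntactically uniform) versions of the structure lemmas
      have edgeC_cons' : ∀ (a : ℕ) (y : List ℕ) (j : ℕ),
          edgeC k h (a :: y) j = 2*(a:ℤ)*(h 2:ℤ) + 1 + edgeC k' h' y j :=
        fun a y j => edgeC_cons k h a y j
      have isEdge_cons' : ∀ (a : ℕ) (y : List ℕ) (j : ℕ),
          IsEdge (n+1) k (a :: y) j ↔ a < k 1 ∧ IsEdge n k' y j :=
        fun a y j => isEdge_cons (n+1) k a y j hq2
      -- range facts for subtree edges, in the h 2 form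
      have IHrange' : ∀ (y : List ℕ) (j : ℕ), IsEdge n k' y j →
          0 ≤ edgeC k' h' y j ∧ edgeC k' h' y j ≤ 2*(h 2:ℤ) - 2 ∧
            edgeC k' h' y j ≠ (h 2:ℤ) - 1 := by
        intro y j he
        obtain ⟨hc0, hc1, hcne⟩ := IHrange y j he
        rw [hH'1] at hc1 hcne
        exact ⟨hc0, by omega, by omega⟩
      -- range clause
      have range1 : ∀ (x : List ℕ) (j : ℕ), IsEdge (n+1) k x j →
          0 ≤ edgeC k h x j ∧ edgeC k h x j ≤ 2*((h 1 : ℤ) - 1) ∧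
            edgeC k h x j ≠ (h 1 : ℤ) - 1 := by
        intro x j he
        match x with
        | [] =>
          obtain ⟨-, hj⟩ := (isEdge_nil (n+1) k j).mp he
          rw [edgeC_nil]
          have hj' : (j : ℤ) ≤ (k 1 : ℤ) - 1 := by exact_mod_cast by omega
          have hub : (j:ℤ) * (h 2:ℤ) ≤ ((k 1:ℤ) - 1) * (h 2:ℤ) :=
            mul_le_mul_of_nonneg_right hj' (by omega)
          refine ⟨by positivity, by rw [hK]; nlinarith, ?_⟩
          rw [hK]
          intro hcon
          nlinarith
        | a :: y =>
          obtain ⟨ha, he'⟩ := (isEdge_cons' a y j).mp he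
          obtain ⟨hc0, hc1, hcne⟩ := IHrange' y j he'
          rw [edgeC_cons']
          have ha' : (a : ℤ) ≤ (k 1 : ℤ) - 1 := by exact_mod_cast by omega
          have hub : (a:ℤ) * (h 2:ℤ) ≤ ((k 1:ℤ) - 1) * (h 2:ℤ) :=
            mul_le_mul_of_nonneg_right ha' (by omega)
          have ha0 : (0:ℤ) ≤ (a:ℤ) * (h 2:ℤ) := by positivity
          refine ⟨by linarith, by rw [hK]; nlinarith, ?_⟩
          rw [hK]
          intro hcon
          have hu1 : edgeC k' h' y j + 1 = ((k 1:ℤ) - 2*a) * (h 2:ℤ) := by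
            linear_combination hcon
          obtain ⟨-, hu⟩ := helper1 (h 2:ℤ) ((k 1:ℤ) - 2*a) (edgeC k' h' y j)
            h2pos' hc0 hc1 hu1
          exact hcne hu
      refine ⟨range1, ?_⟩
      intro t ht0 htM htne
      rw [hK] at htM htne
      by_cases hdvd : (h 2 : ℤ) ∣ t
      · -- t is a multiple of h 2 : root edges
        obtain ⟨m, hm⟩ := hdvd
        rw [mul_comm] at hm
        subst hm
        have hm0 : 0 ≤ m := by
          rcases le_or_gt 0 m with hle | hlt
          · exact hle
          · exfalso
            have : m * (h 2:ℤ) ≤ -1 * (h 2:ℤ) :=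
              mul_le_mul_of_nonneg_right (by omega) (by omega)
            linarith
        have hm2k : m ≤ 2 * (k 1:ℤ) := by
          rcases le_or_gt m (2*(k 1:ℤ)) with hle | hlt
          · exact hle
          · exfalso
            have : (2*(k 1:ℤ)+1) * (h 2:ℤ) ≤ m * (h 2:ℤ) :=
              mul_le_mul_of_nonneg_right (by omega) (by omega)
            nlinarith
        have hmk : m ≠ (k 1:ℤ) := by
          intro hcon; subst hcon; exact htne rfl
        have key : ∀ (j' : ℤ), 0 ≤ j' → j' < (k 1:ℤ) →
            (j' * (h 2:ℤ) = m * (h 2:ℤ) ∨ j' * (h 2:ℤ) = 2*((k 1:ℤ) * (h 2:ℤ)) - m * (h 2:ℤ)) →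
            (m < (k 1:ℤ) ∧ j' = m) ∨ ((k 1:ℤ) < m ∧ j' = 2*(k 1:ℤ) - m) := by
          intro j' hj0 hjk hor
          have hcan : ∀ c : ℤ, j' * (h 2:ℤ) = c * (h 2:ℤ) → j' = c := by
            intro c hc
            exact mul_right_cancel₀ (by omega) hc
          rcases hor with hor | hor
          · have hj'm := hcan m hor
            exact Or.inl ⟨by omega, hj'm⟩
          · have hj'm := hcan (2*(k 1:ℤ) - m) (by rw [hor]; ring)
            exact Or.inr ⟨by omega, hj'm⟩
        set j0 : ℕ := if m < (k 1:ℤ) then m.toNat else (2*(k 1:ℤ) - m).toNat with hj0def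
        have hj0cast : (j0 : ℤ) = if m < (k 1:ℤ) then m else 2*(k 1:ℤ) - m := by
          rw [hj0def]; split <;> rw [Int.toNat_of_nonneg (by omega)]
        have hj0k : j0 < k 1 := by
          have : (j0:ℤ) < (k 1:ℤ) := by rw [hj0cast]; split <;> omega
          exact_mod_cast this
        refine ⟨([], j0), ⟨(isEdge_nil (n+1) k j0).mpr ⟨hq2, hj0k⟩, ?_⟩, ?_⟩
        · show (edgeC k h [] j0 = _ ∨ _)
          rw [edgeC_nil, hK, hj0cast]
          split
          · left; rfl
          · right; ring
        · rintro ⟨x', j'⟩ ⟨hpe, hpc⟩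
          dsimp only at hpe hpc
          rw [hK] at hpc
          match x' with
          | [] =>
            obtain ⟨-, hj'⟩ := (isEdge_nil (n+1) k j').mp hpe
            rw [edgeC_nil] at hpc
            have hres := key (j' : ℤ) (by positivity) (by exact_mod_cast hj') hpc
            have hj'j0 : (j' : ℤ) = (j0 : ℤ) := by
              rw [hj0cast]
              rcases hres with ⟨h1', h2'⟩ | ⟨h1', h2'⟩
              · rw [if_pos h1']; exact h2'
              · rw [if_neg (by omega)]; exact h2'
            have : j' = j0 := by exact_mod_cast hj'j0
            rw [this]
          | a' :: y' =>
            exfalso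
            obtain ⟨ha', hpe'⟩ := (isEdge_cons' a' y' j').mp hpe
            obtain ⟨hc0, hc1, hcne⟩ := IHrange' y' j' hpe'
            rw [edgeC_cons'] at hpc
            rcases hpc with hpc | hpc
            · have hu1 : edgeC k' h' y' j' + 1 = (m - 2*(a':ℤ)) * (h 2:ℤ) := by
                linear_combination hpc
              obtain ⟨-, hu⟩ := helper1 (h 2:ℤ) _ (edgeC k' h' y' j') h2pos' hc0 hc1 hu1
              exact hcne hu
            · have hu1 : edgeC k' h' y' j' + 1 = (2*(k 1:ℤ) - m - 2*(a':ℤ)) * (h 2:ℤ) := by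
                linear_combination hpc
              obtain ⟨-, hu⟩ := helper1 (h 2:ℤ) _ (edgeC k' h' y' j') h2pos' hc0 hc1 hu1
              exact hcne hu
      · -- t is not a multiple of h 2 : subtree edges
        obtain ⟨a, u, hteq, hu0, hu2, hune, ha0, hak⟩ :
            ∃ a u : ℤ, t = 2*a*(h 2:ℤ) + 1 + u ∧ 0 ≤ u ∧ u ≤ 2*(h 2:ℤ) - 2 ∧
              u ≠ (h 2:ℤ) - 1 ∧ 0 ≤ a ∧ a ≤ (k 1:ℤ) - 1 := by
          have h2h : (0:ℤ) < 2*(h 2:ℤ) := by omega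
          set a := t / (2*(h 2:ℤ)) with hadef
          set r := t % (2*(h 2:ℤ)) with hrdef
          have hdiv : t = 2*(h 2:ℤ) * a + r := (Int.mul_ediv_add_emod _ _).symm
          have hr0 : 0 ≤ r := Int.emod_nonneg _ (by omega)
          have hr1 : r < 2*(h 2:ℤ) := Int.emod_lt_of_pos _ h2h
          have hrne0 : r ≠ 0 := by
            intro hcon
            exact hdvd ⟨2*a, by rw [hdiv, hcon]; ring⟩
          have hrneh : r ≠ (h 2:ℤ) := by
            intro hcon
            exact hdvd ⟨2*a+1, by rw [hdiv, hcon]; ring⟩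
          have hr0' : 1 ≤ r := by omega
          have ha0 : 0 ≤ a := Int.ediv_nonneg ht0 (by omega)
          have hak : a ≤ (k 1:ℤ) - 1 := by
            rcases le_or_gt a ((k 1:ℤ) - 1) with hle | hlt
            · exact hle
            · exfalso
              have : 2*(h 2:ℤ) * (k 1:ℤ) ≤ 2*(h 2:ℤ) * a :=
                mul_le_mul_of_nonneg_left (by omega) (by omega)
              nlinarith
          exact ⟨a, r - 1, by linarith [hdiv, (by ring : 2*(h 2:ℤ)*a = 2*a*(h 2:ℤ))],
            by omega, by omega, by omega, ha0, hak⟩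
        obtain ⟨p', hp', huniq⟩ := IHuniq u hu0 (by rw [hH'1]; omega) (by rw [hH'1]; omega)
        obtain ⟨y, j⟩ := p'
        obtain ⟨hyje, hyjc⟩ := hp'
        dsimp only at hyje hyjc
        rw [hH'1] at hyjc
        have huniq' : ∀ (y' : List ℕ) (j' : ℕ), IsEdge n k' y' j' →
            (edgeC k' h' y' j' = u ∨ edgeC k' h' y' j' = 2*((h 2:ℤ) - 1) - u) →
            y' = y ∧ j' = j := by
          intro y' j' he hc
          have := huniq (y', j') ⟨he, by rw [hH'1]; exact hc⟩
          exact ⟨congrArg Prod.fst this, congrArg Prod.snd this⟩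
        have ha1cast : ((a.toNat : ℕ) : ℤ) = a := Int.toNat_of_nonneg ha0
        have ha2cast : ((((k 1:ℤ) - 1 - a).toNat : ℕ) : ℤ) = (k 1:ℤ) - 1 - a :=
          Int.toNat_of_nonneg (by omega)
        have hblock : ∀ (a' : ℕ) (y' : List ℕ) (j' : ℕ), IsEdge n k' y' j' →
            ∀ A : ℤ, 0 ≤ A → A ≤ (k 1:ℤ) - 1 → ∀ w : ℤ, 0 ≤ w → w ≤ 2*(h 2:ℤ) - 2 →
            edgeC k h (a' :: y') j' = 2*A*(h 2:ℤ) + 1 + w →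
            (a' : ℤ) = A ∧ edgeC k' h' y' j' = w := by
          intro a' y' j' hpe' A hA0 hA1 w hw0 hw1 heq
          obtain ⟨hc0, hc1, hcne⟩ := IHrange' y' j' hpe'
          rw [edgeC_cons'] at heq
          exact block_eq (h 2:ℤ) (a':ℤ) A (edgeC k' h' y' j') w h2pos' hc0 hc1 hw0 hw1 heq
        -- the common uniqueness argument
        have huniqmain : ∀ (x' : List ℕ) (j' : ℕ), IsEdge (n+1) k x' j' →
            (edgeC k h x' j' = t ∨ edgeC k h x' j' = 2*((k 1:ℤ)*(h 2:ℤ)) - t) →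
            (edgeC k' h' y j = u ∧ x' = a.toNat :: y ∧ j' = j) ∨
            (edgeC k' h' y j = 2*((h 2:ℤ)-1) - u ∧ x' = ((k 1:ℤ) - 1 - a).toNat :: y ∧ j' = j) := by
          intro x' j' hpe hpc
          match x' with
          | [] =>
            exfalso
            rw [edgeC_nil] at hpc
            rcases hpc with hpc | hpc
            · exact hdvd ⟨(j' : ℤ), by linear_combination -hpc⟩
            · exact hdvd ⟨2*(k 1:ℤ) - (j':ℤ), by linear_combination hpc⟩
          | a' :: y' =>
            obtain ⟨ha', hpe'⟩ := (isEdge_cons' a' y' j').mp hpe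
            rcases hpc with hpc | hpc
            · obtain ⟨haA, hcw⟩ := hblock a' y' j' hpe' a ha0 hak u hu0 hu2
                (by rw [hpc, hteq])
              obtain ⟨hyy, hjj⟩ := huniq' y' j' hpe' (Or.inl hcw)
              subst hyy; subst hjj
              left
              refine ⟨hcw, ?_, rfl⟩
              have : a' = a.toNat := by omega
              rw [this]
            · obtain ⟨haA, hcw⟩ := hblock a' y' j' hpe' ((k 1:ℤ) - 1 - a) (by omega) (by omega)
                (2*((h 2:ℤ) - 1) - u) (by omega) (by omega)
                (by rw [hpc, hteq]; ring)
              obtain ⟨hyy, hjj⟩ := huniq' y' j' hpe' (Or.inr hcw)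
              subst hyy; subst hjj
              right
              refine ⟨hcw, ?_, rfl⟩
              have : a' = ((k 1:ℤ) - 1 - a).toNat := by omega
              rw [this]
        rcases hyjc with hcu | hcu
        · -- c' = u : witness in block a
          refine ⟨(a.toNat :: y, j), ⟨?_, ?_⟩, ?_⟩
          · refine (isEdge_cons' _ y j).mpr ⟨?_, hyje⟩
            have : ((a.toNat : ℕ) : ℤ) < (k 1 : ℤ) := by omega
            exact_mod_cast this
          · left
            show edgeC k h (a.toNat :: y) j = t
            rw [edgeC_cons', hcu, hteq, ha1cast]
          · rintro ⟨x', j'⟩ ⟨hpe, hpc⟩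
            dsimp only at hpe hpc
            rw [hK] at hpc
            rcases huniqmain x' j' hpe hpc with ⟨hc, hx, hj⟩ | ⟨hc, hx, hj⟩
            · rw [hx, hj]
            · exfalso; rw [hcu] at hc; omega
        · -- c' = 2(h2-1) - u : witness in block k1-1-a
          refine ⟨(((k 1:ℤ) - 1 - a).toNat :: y, j), ⟨?_, ?_⟩, ?_⟩
          · refine (isEdge_cons' _ y j).mpr ⟨?_, hyje⟩
            have : ((((k 1:ℤ) - 1 - a).toNat : ℕ) : ℤ) < (k 1 : ℤ) := by omega
            exact_mod_cast this
          · right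
            show edgeC k h (((k 1:ℤ) - 1 - a).toNat :: y) j = _
            rw [edgeC_cons', hcu, hK, ha2cast, hteq]
            ring
          · rintro ⟨x', j'⟩ ⟨hpe, hpc⟩
            dsimp only at hpe hpc
            rw [hK] at hpc
            rcases huniqmain x' j' hpe hpc with ⟨hc, hx, hj⟩ | ⟨hc, hx, hj⟩
            · exfalso; rw [hcu] at hc; omega
            · rw [hx, hj]

end RofaAux

open RofaAux in
/-- The labelling `f` of Theorem 1 is a graceful labelling of the rooted symmetric tree:
it is a bijection from the vertices (valid index sequences) onto `{0, ..., h 1 - 1}`, the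
induced edge labels `|f(parent) - f(child)|` are pairwise distinct, and hence the set of
edge labels is exactly `{1, ..., h 1 - 1}`. -/
theorem rofaLabel_graceful (q : ℕ) (k h : ℕ → ℕ) (hq : 1 ≤ q)
    (hk : ∀ i, 1 ≤ i → i ≤ q - 1 → 1 ≤ k i)
    (hhq : h q = 1)
    (hrec : ∀ i, 1 ≤ i → i ≤ q - 1 → h i = 1 + k i * h (i + 1)) :
    Set.BijOn (rofaLabel k h) {x | ValidIdx q k x} (Set.Ico 0 (h 1 : ℤ)) ∧
    (∀ x x' : List ℕ, ∀ j j' : ℕ,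
      ValidIdx q k x → x.length + 1 ≤ q - 1 → j < k (x.length + 1) →
      ValidIdx q k x' → x'.length + 1 ≤ q - 1 → j' < k (x'.length + 1) →
      |rofaLabel k h x - rofaLabel k h (x ++ [j])| =
        |rofaLabel k h x' - rofaLabel k h (x' ++ [j'])| →
      x = x' ∧ j = j') ∧
    {m : ℤ | ∃ (x : List ℕ) (j : ℕ), ValidIdx q k x ∧ x.length + 1 ≤ q - 1 ∧
        j < k (x.length + 1) ∧
        m = |rofaLabel k h x - rofaLabel k h (x ++ [j])|} =
      Set.Icc 1 ((h 1 : ℤ) - 1) := by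
  refine ⟨keyA q k h hq hk hhq hrec, ?_, ?_⟩
  · -- distinct edge labels
    intro x x' j j' hv hl hj hv' hl' hj' heq
    have hq2 : 2 ≤ q := by omega
    have H1 : (h 1 : ℤ) = 1 + (k 1 : ℤ) * (h 2 : ℤ) := by
      exact_mod_cast hrec 1 (by omega) (by omega)
    obtain ⟨B1, B2⟩ := keyB q k h hq hk hhq hrec
    have he : IsEdge q k x j := ⟨hv, hl, hj⟩
    have he' : IsEdge q k x' j' := ⟨hv', hl', hj'⟩
    obtain ⟨hc0, hc1, hcne⟩ := B1 x j he
    rw [diff_eq k h x j H1, diff_eq k h x' j' H1] at heq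
    have hor : edgeC k h x' j' = edgeC k h x j ∨
        edgeC k h x' j' = 2*((h 1:ℤ) - 1) - edgeC k h x j := by
      rcases abs_eq_abs.mp heq.symm with hcase | hcase
      · left; linarith
      · right; linarith
    have hpair := B2 (edgeC k h x j) hc0 hc1 hcne
    obtain ⟨p0, -, huniq⟩ := hpair
    have e1 : (x, j) = p0 := huniq (x, j) ⟨he, Or.inl rfl⟩
    have e2 : (x', j') = p0 := huniq (x', j') ⟨he', hor⟩
    have : (x, j) = ((x', j') : List ℕ × ℕ) := by rw [e1, e2]
    exact ⟨congrArg Prod.fst this, congrArg Prod.snd this⟩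
  · -- the set of edge labels
    rcases Nat.lt_or_ge q 2 with hq1 | hq2
    · -- q = 1 : both sides empty
      have hq1' : q = 1 := by omega
      subst hq1'
      have h11 : h 1 = 1 := hhq
      ext m
      simp only [Set.mem_setOf_eq, Set.mem_Icc, h11]
      constructor
      · rintro ⟨x, j, -, hl, -⟩
        omega
      · rintro ⟨hm1, hm2⟩
        exfalso
        push_cast at hm2
        omega
    · have H1 : (h 1 : ℤ) = 1 + (k 1 : ℤ) * (h 2 : ℤ) := by
        exact_mod_cast hrec 1 (by omega) (by omega)
      obtain ⟨B1, B2⟩ := keyB q k h hq hk hhq hrec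
      ext m
      simp only [Set.mem_setOf_eq, Set.mem_Icc]
      constructor
      · rintro ⟨x, j, hv, hl, hj, hm⟩
        obtain ⟨hc0, hc1, hcne⟩ := B1 x j ⟨hv, hl, hj⟩
        rw [diff_eq k h x j H1] at hm
        rcases le_or_gt (edgeC k h x j) ((h 1:ℤ) - 1) with hle | hlt
        · rw [abs_of_nonpos (by omega)] at hm
          omega
        · rw [abs_of_pos (by omega)] at hm
          omega
      · rintro ⟨hm1, hm2⟩
        obtain ⟨⟨x, j⟩, ⟨⟨hv, hl, hj⟩, hc⟩, -⟩ :=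
          B2 ((h 1:ℤ) - 1 - m) (by omega) (by omega) (by omega)
        refine ⟨x, j, hv, hl, hj, ?_⟩
        rw [diff_eq k h x j H1]
        rcases hc with hc | hc
        · rw [hc, abs_of_nonpos (by omega)]
          ring
        · rw [hc, abs_of_nonneg (by omega)]
          ring
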